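/- Let E be a real inner product space, N ≥ 1, υ ≥ 0, L ≥ μ ≥ 0, and let R : Fin N → (E → ℝ) be a family of differentiable client risks with gradients g i : E → E, each satisfying for all w₁, w₂ both the L-smoothness inequality R i (w₁) − R i (w₂) ≤ ⟨g i (w₂), w₁ − w₂⟩ + (L/2)‖w₁ − w₂‖² and the μ-convexity inequality R i (w₁) − R i (w₂) ≥ ⟨g i (w₂), w₁ − w₂⟩ + (μ/2)‖w₁ − w₂‖². Let R̄(w) = (1/N)·∑_i R i (w). Then for every w ∈ E and every ξ : Fin N → ℝ with ξ i ≥ −υ for all i and ∑_i ξ i = 1, one has ∑_i ξ i · R i (w) ≤ R̄(w) + (1 + N·υ)·max_{i,j} (R i (0) − R j (0)) + (1 + N·υ)·((L−μ)/2)·‖w‖² + 2·(1 + N·υ)·max_i |⟨g i (w), w⟩|. -/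

import Mathlib

open RealInnerProductSpace

/-- Out-of-distribution risk bound. For any affine combination with
weights `ξ i ≥ -υ` summing to one, the combined client risk is bounded by the
average risk plus terms involving the spread of the risks at the origin, the
smoothness/convexity gap, and the invariant penalty terms. -/
theorem ood_risk_upper_bound
    {E : Type*} [NormedAddCommGroup E] [InnerProductSpace ℝ E] [CompleteSpace E]
    (N : ℕ) (hN : 0 < N) (υ : ℝ) (hυ : 0 ≤ υ)
    (L μ : ℝ) (hμ : 0 ≤ μ) (hLμ : μ ≤ L)
    (R : Fin N → E → ℝ) (g : Fin N → E → E)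
    (hgrad : ∀ i w, HasGradientAt (R i) (g i w) w)
    (hsmooth : ∀ i w₁ w₂, R i w₁ - R i w₂ ≤ ⟪g i w₂, w₁ - w₂⟫ + L / 2 * ‖w₁ - w₂‖ ^ 2)
    (hconv : ∀ i w₁ w₂, R i w₁ - R i w₂ ≥ ⟪g i w₂, w₁ - w₂⟫ + μ / 2 * ‖w₁ - w₂‖ ^ 2)
    (w : E) (ξ : Fin N → ℝ) (hξ : ∀ i, -υ ≤ ξ i) (hsum : ∑ i, ξ i = 1) :
    ∑ i, ξ i * R i w ≤
      (1 / N) * ∑ i, R i w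
        + (1 + N * υ) *
            ((Finset.univ ×ˢ Finset.univ).sup'
              ⟨(⟨0, hN⟩, ⟨0, hN⟩), Finset.mem_product.mpr ⟨Finset.mem_univ _, Finset.mem_univ _⟩⟩
              (fun p => R p.1 0 - R p.2 0))
        + (1 + N * υ) * ((L - μ) / 2) * ‖w‖ ^ 2
        + 2 * (1 + N * υ) *
            (Finset.univ.sup' (Finset.univ_nonempty_iff.mpr ⟨⟨0, hN⟩⟩)
              (fun i => |⟪g i w, w⟫|)) := by
  have hNR : (0:ℝ) < N := by exact_mod_cast hN
  have ne : (Finset.univ : Finset (Fin N)).Nonempty := Finset.univ_nonempty_iff.mpr ⟨⟨0, hN⟩⟩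
  have nep : (Finset.univ ×ˢ Finset.univ : Finset (Fin N × Fin N)).Nonempty :=
    ⟨(⟨0, hN⟩, ⟨0, hN⟩), Finset.mem_product.mpr ⟨Finset.mem_univ _, Finset.mem_univ _⟩⟩
  set P := (Finset.univ ×ˢ Finset.univ).sup'
      ⟨(⟨0, hN⟩, ⟨0, hN⟩), Finset.mem_product.mpr ⟨Finset.mem_univ _, Finset.mem_univ _⟩⟩
      (fun p : Fin N × Fin N => R p.1 0 - R p.2 0) with hP
  set Q := Finset.univ.sup' (Finset.univ_nonempty_iff.mpr ⟨⟨0, hN⟩⟩)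
      (fun i => |⟪g i w, w⟫|) with hQ
  set B := P + (L - μ) / 2 * ‖w‖ ^ 2 + 2 * Q with hB
  -- key pointwise bound
  have key : ∀ i j, R i w - R j w ≤ B := by
    intro i j
    have hup : R i w ≤ R i 0 + ⟪g i w, w⟫ - μ / 2 * ‖w‖ ^ 2 := by
      have := hconv i 0 w
      simp only [zero_sub, inner_neg_right, norm_neg] at this
      linarith
    have hlo : R j 0 + ⟪g j w, w⟫ - L / 2 * ‖w‖ ^ 2 ≤ R j w := by
      have := hsmooth j 0 w
      simp only [zero_sub, inner_neg_right, norm_neg] at this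
      linarith
    have hPij : R i 0 - R j 0 ≤ P :=
      Finset.le_sup' (b := (i, j)) (fun p : Fin N × Fin N => R p.1 0 - R p.2 0)
        (Finset.mem_product.mpr ⟨Finset.mem_univ i, Finset.mem_univ j⟩)
    have hQi : ⟪g i w, w⟫ ≤ Q :=
      le_trans (le_abs_self _) (Finset.le_sup' (fun i => |⟪g i w, w⟫|) (Finset.mem_univ i))
    have hQj : -Q ≤ ⟪g j w, w⟫ := by
      have := Finset.le_sup' (fun i => |⟪g i w, w⟫|) (Finset.mem_univ j)
      have := neg_abs_le (⟪g j w, w⟫ : ℝ)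
      linarith
    have : R i w - R j w ≤ (R i 0 - R j 0) + (⟪g i w, w⟫ - ⟪g j w, w⟫)
        + (L - μ) / 2 * ‖w‖ ^ 2 := by linarith
    rw [hB]; linarith
  have hB0 : 0 ≤ B := by have := key ⟨0, hN⟩ ⟨0, hN⟩; linarith
  -- coefficients
  set c : Fin N → ℝ := fun i => ξ i - 1 / N with hc
  set a : Fin N → ℝ := fun i => max (c i) 0 with ha
  set b : Fin N → ℝ := fun i => max (-c i) 0 with hb
  have hab : ∀ i, c i = a i - b i := by
    intro i; simp [ha, hb, max_def]; split_ifs <;> linarith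
  have ha0 : ∀ i, 0 ≤ a i := fun i => le_max_right _ _
  have hb0 : ∀ i, 0 ≤ b i := fun i => le_max_right _ _
  have hcsum : ∑ i, c i = 0 := by
    simp only [hc, Finset.sum_sub_distrib, hsum, Finset.sum_const, Finset.card_univ,
      Fintype.card_fin, nsmul_eq_mul]
    field_simp
    ring
  have hS : ∑ i, a i = ∑ i, b i := by
    have : ∑ i, (a i - b i) = 0 := by
      rw [← hcsum]; exact Finset.sum_congr rfl fun i _ => (hab i).symm
    rw [Finset.sum_sub_distrib] at this; linarith
  have hSle : ∑ i, b i ≤ 1 + N * υ := by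
    have : ∀ i ∈ Finset.univ, b i ≤ υ + 1 / N := by
      intro i _
      have h1 := hξ i
      have : -c i ≤ υ + 1 / N := by simp only [hc]; linarith
      exact max_le this (by positivity)
    calc ∑ i, b i ≤ ∑ _i : Fin N, (υ + 1 / N) := Finset.sum_le_sum this
      _ = N * (υ + 1 / N) := by
          rw [Finset.sum_const, Finset.card_univ, Fintype.card_fin, nsmul_eq_mul]
      _ = 1 + N * υ := by field_simp; ring
  -- max and min
  set M := Finset.univ.sup' ne (fun i => R i w) with hM
  set m := Finset.univ.inf' ne (fun i => R i w) with hm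
  have hMm : M - m ≤ B := by
    obtain ⟨i, _, hi⟩ := Finset.exists_mem_eq_sup' ne (fun i => R i w)
    obtain ⟨j, _, hj⟩ := Finset.exists_mem_eq_inf' ne (fun i => R i w)
    rw [hM, hm, hi, hj]; exact key i j
  have hmM : m ≤ M := by
    have h1 : m ≤ R ⟨0, hN⟩ w := Finset.inf'_le (fun i => R i w) (Finset.mem_univ _)
    have h2 : R ⟨0, hN⟩ w ≤ M := Finset.le_sup' (fun i => R i w) (Finset.mem_univ _)
    linarith
  have hcR : ∑ i, c i * R i w ≤ (1 + N * υ) * B := by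
    have h1 : ∑ i, a i * R i w ≤ (∑ i, b i) * M := by
      rw [← hS, Finset.sum_mul]
      refine Finset.sum_le_sum fun i _ => ?_
      exact mul_le_mul_of_nonneg_left (Finset.le_sup' (fun j => R j w) (Finset.mem_univ i)) (ha0 i)
    have h2 : (∑ i, b i) * m ≤ ∑ i, b i * R i w := by
      rw [Finset.sum_mul]
      refine Finset.sum_le_sum fun i _ => ?_
      exact mul_le_mul_of_nonneg_left (Finset.inf'_le (fun j => R j w) (Finset.mem_univ i)) (hb0 i)
    have h3 : ∑ i, c i * R i w = ∑ i, a i * R i w - ∑ i, b i * R i w := by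
      rw [← Finset.sum_sub_distrib]
      exact Finset.sum_congr rfl fun i _ => by rw [hab i]; ring
    have hSb0 : 0 ≤ ∑ i, b i := Finset.sum_nonneg fun i _ => hb0 i
    calc ∑ i, c i * R i w ≤ (∑ i, b i) * (M - m) := by rw [h3]; nlinarith
      _ ≤ (1 + N * υ) * B := by nlinarith
  have hsplit : ∑ i, ξ i * R i w = (1 / N) * ∑ i, R i w + ∑ i, c i * R i w := by
    rw [Finset.mul_sum, ← Finset.sum_add_distrib]
    exact Finset.sum_congr rfl fun i _ => by simp only [hc]; ring
  rw [hsplit]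
  calc (1 / (N:ℝ)) * ∑ i, R i w + ∑ i, c i * R i w
      ≤ (1 / (N:ℝ)) * ∑ i, R i w + (1 + N * υ) * B := (add_le_add_iff_left _).mpr hcR
    _ = (1 / N) * ∑ i, R i w + (1 + N * υ) * P
        + (1 + N * υ) * ((L - μ) / 2) * ‖w‖ ^ 2 + 2 * (1 + N * υ) * Q := by rw [hB]; ring
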